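/- The space D of finitely supported functions, with metric given by the segregation formula d_D(f1,f2)=(ρ1−s)+(ρ2−s), is a real tree. -/

import Mathlib

open Set Filter

noncomputable section

/-- The space `D`: real functions on `[0, ρ)` with `f 0 = 0`, vanishing except
at finitely many points (the function is recorded on all of `ℝ`, vanishing
outside `[0, ρ)`). -/
structure Dp where
  ρ : ℝ
  toFun : ℝ → ℝ
  ρ_nonneg : 0 ≤ ρ
  zero_at_zero : toFun 0 = 0
  supp_subset : ∀ t, t ∉ Set.Ico 0 ρ → toFun t = 0
  finite_supp : {t | toFun t ≠ 0}.Finite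

/-- The moment of segregation of two elements of `D`. -/
noncomputable def segD (f1 f2 : Dp) : ℝ :=
  sSup {t | t ≤ min f1.ρ f2.ρ ∧ ∀ t' ∈ Set.Ico (0:ℝ) t, f1.toFun t' = f2.toFun t'}

/-- The metric on `D`: `d_D(f1, f2) = (ρ1 - s) + (ρ2 - s)`. -/
noncomputable def dD (f1 f2 : Dp) : ℝ := (f1.ρ - segD f1 f2) + (f2.ρ - segD f1 f2)

/-- A geodesic segment in `D` from `a` to `b`. -/
def IsGeodesicD (g : ℝ → Dp) (a b : Dp) : Prop :=
  g 0 = a ∧ g (dD a b) = b ∧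
  ∀ x ∈ Set.Icc 0 (dD a b), ∀ y ∈ Set.Icc 0 (dD a b), dD (g x) (g y) = |x - y|

/-! ### Auxiliary development -/

theorem Dp.ext' {a b : Dp} (h1 : a.ρ = b.ρ) (h2 : a.toFun = b.toFun) : a = b := by
  cases a; cases b; simp_all

def segSet (f1 f2 : Dp) : Set ℝ :=
  {t | t ≤ min f1.ρ f2.ρ ∧ ∀ t' ∈ Set.Ico (0:ℝ) t, f1.toFun t' = f2.toFun t'}

lemma segD_eq_sSup (f1 f2 : Dp) : segD f1 f2 = sSup (segSet f1 f2) := rfl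

lemma zero_mem_segSet (f1 f2 : Dp) : (0:ℝ) ∈ segSet f1 f2 :=
  ⟨le_min f1.ρ_nonneg f2.ρ_nonneg, by simp⟩

lemma segSet_nonempty (f1 f2 : Dp) : (segSet f1 f2).Nonempty := ⟨0, zero_mem_segSet f1 f2⟩

lemma segSet_bddAbove (f1 f2 : Dp) : BddAbove (segSet f1 f2) :=
  ⟨min f1.ρ f2.ρ, fun _ ht => ht.1⟩

lemma segD_le_min (f1 f2 : Dp) : segD f1 f2 ≤ min f1.ρ f2.ρ :=
  csSup_le (segSet_nonempty f1 f2) fun _ ht => ht.1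

lemma segD_le_left (f1 f2 : Dp) : segD f1 f2 ≤ f1.ρ :=
  (segD_le_min f1 f2).trans (min_le_left _ _)

lemma segD_le_right (f1 f2 : Dp) : segD f1 f2 ≤ f2.ρ :=
  (segD_le_min f1 f2).trans (min_le_right _ _)

lemma segD_nonneg (f1 f2 : Dp) : 0 ≤ segD f1 f2 :=
  le_csSup (segSet_bddAbove f1 f2) (zero_mem_segSet f1 f2)

lemma le_segD (f1 f2 : Dp) {t : ℝ} (h1 : t ≤ min f1.ρ f2.ρ)
    (h2 : ∀ t' ∈ Set.Ico (0:ℝ) t, f1.toFun t' = f2.toFun t') : t ≤ segD f1 f2 :=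
  le_csSup (segSet_bddAbove f1 f2) ⟨h1, h2⟩

lemma segD_eqOn (f1 f2 : Dp) : ∀ t' ∈ Set.Ico (0:ℝ) (segD f1 f2), f1.toFun t' = f2.toFun t' := by
  rintro t' ⟨h0, hlt⟩
  obtain ⟨t, ht, hlt'⟩ := exists_lt_of_lt_csSup (segSet_nonempty f1 f2) hlt
  exact ht.2 t' ⟨h0, hlt'⟩

lemma segD_comm (f1 f2 : Dp) : segD f1 f2 = segD f2 f1 := by
  unfold segD
  congr 1
  ext t
  simp only [Set.mem_setOf_eq, min_comm f1.ρ f2.ρ]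
  constructor <;> rintro ⟨h1, h2⟩ <;> exact ⟨h1, fun t' ht' => (h2 t' ht').symm⟩

lemma segD_self (a : Dp) : segD a a = a.ρ :=
  le_antisymm (segD_le_left a a) (le_segD a a (by simp) fun _ _ => rfl)

lemma dD_comm (f1 f2 : Dp) : dD f1 f2 = dD f2 f1 := by
  unfold dD; rw [segD_comm]; ring

lemma dD_nonneg (f1 f2 : Dp) : 0 ≤ dD f1 f2 := by
  have h1 := segD_le_left f1 f2
  have h2 := segD_le_right f1 f2
  unfold dD; linarith

/-! ### Truncation -/

def trunc (a : Dp) (r : ℝ) : Dp where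
  ρ := max r 0
  toFun t := if t < r then a.toFun t else 0
  ρ_nonneg := le_max_right _ _
  zero_at_zero := by split <;> simp [a.zero_at_zero]
  supp_subset := by
    intro t ht
    by_cases h : t < r
    · simp only [if_pos h]
      apply a.supp_subset
      intro htm
      exact ht ⟨htm.1, lt_of_lt_of_le h (le_max_left _ _)⟩
    · simp [h]
  finite_supp := by
    apply a.finite_supp.subset
    intro t ht
    simp only [Set.mem_setOf_eq] at ht ⊢
    by_cases h : t < r
    · simpa [h] using ht
    · simp [h] at ht

lemma trunc_ρ (a : Dp) {r : ℝ} (h : 0 ≤ r) : (trunc a r).ρ = r := max_eq_left h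

lemma trunc_toFun (a : Dp) (r t : ℝ) :
    (trunc a r).toFun t = if t < r then a.toFun t else 0 := rfl

lemma trunc_self (a : Dp) : trunc a a.ρ = a := by
  apply Dp.ext'
  · exact max_eq_left a.ρ_nonneg
  · funext t
    rw [trunc_toFun]
    split
    · rfl
    · exact (a.supp_subset t (fun htm => ‹¬ t < a.ρ› htm.2)).symm

lemma trunc_trunc (a : Dp) {r r' : ℝ} (h : r ≤ r') : trunc (trunc a r') r = trunc a r := by
  apply Dp.ext'
  · rfl
  · funext t
    rw [trunc_toFun, trunc_toFun, trunc_toFun]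
    by_cases ht : t < r
    · rw [if_pos ht, if_pos ht, if_pos (lt_of_lt_of_le ht h)]
    · rw [if_neg ht, if_neg ht]

lemma trunc_congr {a b : Dp} {r : ℝ} (h : r ≤ segD a b) : trunc a r = trunc b r := by
  apply Dp.ext'
  · rfl
  · funext t
    rw [trunc_toFun, trunc_toFun]
    by_cases ht : t < r
    · rw [if_pos ht, if_pos ht]
      by_cases ht0 : 0 ≤ t
      · exact segD_eqOn a b t ⟨ht0, lt_of_lt_of_le ht h⟩
      · rw [a.supp_subset t (fun htm => ht0 htm.1), b.supp_subset t (fun htm => ht0 htm.1)]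
    · rw [if_neg ht, if_neg ht]

lemma segD_trunc (a b : Dp) {r r' : ℝ} (hr0 : 0 ≤ r) (hr : r ≤ a.ρ)
    (hr'0 : 0 ≤ r') (hr' : r' ≤ b.ρ) :
    segD (trunc a r) (trunc b r') = min (min r r') (segD a b) := by
  apply le_antisymm
  · apply le_min
    · have := segD_le_min (trunc a r) (trunc b r')
      rwa [trunc_ρ a hr0, trunc_ρ b hr'0] at this
    · apply le_segD
      · have h1 := segD_le_left (trunc a r) (trunc b r')
        have h2 := segD_le_right (trunc a r) (trunc b r')
        rw [trunc_ρ a hr0] at h1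
        rw [trunc_ρ b hr'0] at h2
        exact le_min (h1.trans hr) (h2.trans hr')
      · intro t' ht'
        have h := segD_eqOn (trunc a r) (trunc b r') t' ht'
        have h1 := segD_le_left (trunc a r) (trunc b r')
        have h2 := segD_le_right (trunc a r) (trunc b r')
        rw [trunc_ρ a hr0] at h1
        rw [trunc_ρ b hr'0] at h2
        rw [trunc_toFun, trunc_toFun, if_pos (lt_of_lt_of_le ht'.2 h1),
          if_pos (lt_of_lt_of_le ht'.2 h2)] at h
        exact h
  · apply le_segD
    · rw [trunc_ρ a hr0, trunc_ρ b hr'0]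
      exact min_le_left _ _
    · intro t' ht'
      have hlt := ht'.2
      have htr : t' < r := lt_of_lt_of_le hlt ((min_le_left _ _).trans (min_le_left _ _))
      have htr' : t' < r' := lt_of_lt_of_le hlt ((min_le_left _ _).trans (min_le_right _ _))
      have hts : t' < segD a b := lt_of_lt_of_le hlt (min_le_right _ _)
      rw [trunc_toFun, trunc_toFun, if_pos htr, if_pos htr']
      exact segD_eqOn a b t' ⟨ht'.1, hts⟩

lemma dD_trunc (a b : Dp) {r r' : ℝ} (hr0 : 0 ≤ r) (hr : r ≤ a.ρ)
    (hr'0 : 0 ≤ r') (hr' : r' ≤ b.ρ) :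
    dD (trunc a r) (trunc b r') = r + r' - 2 * min (min r r') (segD a b) := by
  unfold dD
  rw [segD_trunc a b hr0 hr hr'0 hr', trunc_ρ a hr0, trunc_ρ b hr'0]
  ring

lemma eq_trunc_of_segD {a p : Dp} (h : segD a p = p.ρ) : p = trunc a p.ρ := by
  apply Dp.ext'
  · exact (max_eq_left p.ρ_nonneg).symm
  · funext t
    rw [trunc_toFun]
    by_cases ht : t < p.ρ
    · rw [if_pos ht]
      by_cases ht0 : 0 ≤ t
      · exact (segD_eqOn a p t ⟨ht0, h ▸ ht⟩).symm
      · rw [a.supp_subset t (fun htm => ht0 htm.1), p.supp_subset t (fun htm => ht0 htm.1)]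
    · rw [if_neg ht]
      exact p.supp_subset t (fun htm => ht htm.2)

lemma min_segD_le (a p b : Dp) : min (segD a p) (segD p b) ≤ segD a b := by
  apply le_segD
  · exact le_min ((min_le_left _ _).trans (segD_le_left a p))
      ((min_le_right _ _).trans (segD_le_right p b))
  · intro t' ht'
    have h1 := segD_eqOn a p t' ⟨ht'.1, lt_of_lt_of_le ht'.2 (min_le_left _ _)⟩
    have h2 := segD_eqOn p b t' ⟨ht'.1, lt_of_lt_of_le ht'.2 (min_le_right _ _)⟩
    exact h1.trans h2

/-! ### The canonical geodesic -/

def geo (a b : Dp) (x : ℝ) : Dp :=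
  if x ≤ a.ρ - segD a b then trunc a (a.ρ - x) else trunc b (x - a.ρ + 2 * segD a b)

lemma geo_left {a b : Dp} {x : ℝ} (h : x ≤ a.ρ - segD a b) :
    geo a b x = trunc a (a.ρ - x) := if_pos h

lemma geo_right {a b : Dp} {x : ℝ} (h : a.ρ - segD a b ≤ x) :
    geo a b x = trunc b (x - a.ρ + 2 * segD a b) := by
  by_cases hx : x ≤ a.ρ - segD a b
  · have hxe : x = a.ρ - segD a b := le_antisymm hx h
    rw [geo_left hx]
    have h1 : a.ρ - x = segD a b := by rw [hxe]; ring
    have h2 : x - a.ρ + 2 * segD a b = segD a b := by rw [hxe]; ring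
    rw [h1, h2]
    exact trunc_congr le_rfl
  · exact if_neg hx

lemma dD_eq (a b : Dp) : dD a b = a.ρ + b.ρ - 2 * segD a b := by unfold dD; ring

lemma geo_zero (a b : Dp) : geo a b 0 = a := by
  rw [geo_left (by linarith [segD_le_left a b]), sub_zero, trunc_self]

lemma geo_end (a b : Dp) : geo a b (dD a b) = b := by
  rw [geo_right (by rw [dD_eq]; linarith [segD_le_right a b]), dD_eq]
  have : a.ρ + b.ρ - 2 * segD a b - a.ρ + 2 * segD a b = b.ρ := by ring
  rw [this, trunc_self]

lemma geo_dist (a b : Dp) : ∀ x ∈ Set.Icc 0 (dD a b), ∀ y ∈ Set.Icc 0 (dD a b),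
    dD (geo a b x) (geo a b y) = |x - y| := by
  have hs0 := segD_nonneg a b
  have hs1 := segD_le_left a b
  have hs2 := segD_le_right a b
  set s := segD a b with hs
  -- cross-distance helper
  have cross : ∀ x ∈ Set.Icc 0 (dD a b), ∀ y ∈ Set.Icc 0 (dD a b),
      x ≤ a.ρ - s → a.ρ - s ≤ y → dD (geo a b x) (geo a b y) = y - x := by
    rintro x ⟨hx0, hxd⟩ y ⟨hy0, hyd⟩ hx hy
    rw [geo_left hx, geo_right hy]
    rw [dD_trunc a b (by linarith) (by linarith) (by linarith) (by rw [dD_eq] at hyd; linarith)]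
    have hmin : min (min (a.ρ - x) (y - a.ρ + 2 * s)) s = s := by
      apply min_eq_right
      exact le_min (by linarith) (by linarith)
    rw [hmin]; ring
  intro x hx y hy
  by_cases hxl : x ≤ a.ρ - s
  · by_cases hyl : y ≤ a.ρ - s
    · rw [geo_left hxl, geo_left hyl]
      obtain ⟨hx0, hxd⟩ := hx
      obtain ⟨hy0, hyd⟩ := hy
      rw [dD_trunc a a (by linarith) (by linarith) (by linarith) (by linarith), segD_self]
      have h1 : min (min (a.ρ - x) (a.ρ - y)) a.ρ = min (a.ρ - x) (a.ρ - y) := by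
        apply min_eq_left
        exact (min_le_left _ _).trans (by linarith)
      rw [h1]
      rcases le_total x y with h | h
      · rw [min_eq_right (by linarith), abs_of_nonpos (by linarith)]; ring
      · rw [min_eq_left (by linarith), abs_of_nonneg (by linarith)]; ring
    · rw [cross x hx y hy hxl (le_of_not_ge hyl),
        abs_of_nonpos (by linarith [le_of_not_ge hyl])]
      ring
  · by_cases hyl : y ≤ a.ρ - s
    · rw [dD_comm, cross y hy x hx hyl (le_of_not_ge hxl),
        abs_of_nonneg (by linarith [le_of_not_ge hxl])]
    · push_neg at hxl hyl
      rw [geo_right hxl.le, geo_right hyl.le]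
      obtain ⟨hx0, hxd⟩ := hx
      obtain ⟨hy0, hyd⟩ := hy
      rw [dD_eq] at hxd hyd
      rw [dD_trunc b b (by linarith) (by linarith) (by linarith) (by linarith), segD_self]
      have h1 : min (min (x - a.ρ + 2*s) (y - a.ρ + 2*s)) b.ρ
          = min (x - a.ρ + 2*s) (y - a.ρ + 2*s) := by
        apply min_eq_left
        exact (min_le_left _ _).trans (by linarith)
      rw [h1]
      rcases le_total x y with h | h
      · rw [min_eq_left (by linarith), abs_of_nonpos (by linarith)]; ring
      · rw [min_eq_right (by linarith), abs_of_nonneg (by linarith)]; ring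

lemma geo_isGeodesic (a b : Dp) : IsGeodesicD (geo a b) a b :=
  ⟨geo_zero a b, geo_end a b, geo_dist a b⟩

lemma geo_unique (a b : Dp) (g' : ℝ → Dp) (h : IsGeodesicD g' a b) :
    Set.EqOn (geo a b) g' (Set.Icc 0 (dD a b)) := by
  obtain ⟨h0, hd, hdist⟩ := h
  intro x hx
  obtain ⟨hx0, hxd⟩ := hx
  set p := g' x with hp
  have hd0 : (0:ℝ) ∈ Set.Icc 0 (dD a b) := ⟨le_refl _, dD_nonneg a b⟩
  have hdd : dD a b ∈ Set.Icc 0 (dD a b) := ⟨dD_nonneg a b, le_refl _⟩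
  have hpa : dD a p = x := by
    have := hdist 0 hd0 x ⟨hx0, hxd⟩
    rw [h0] at this
    rw [this, abs_of_nonpos (by linarith), neg_sub, sub_zero]
  have hpb : dD p b = dD a b - x := by
    have := hdist x ⟨hx0, hxd⟩ (dD a b) hdd
    rw [hd] at this
    rw [this, abs_of_nonpos (by linarith)]
    ring
  set s1 := segD a p with hs1
  set s2 := segD p b with hs2
  set s := segD a b with hss
  have e1 : a.ρ + p.ρ - 2 * s1 = x := by rw [← hpa, dD_eq]
  have e2 : p.ρ + b.ρ - 2 * s2 = dD a b - x := by rw [← hpb, dD_eq]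
  have ed : dD a b = a.ρ + b.ρ - 2 * s := dD_eq a b
  have hsum : s1 + s2 = p.ρ + s := by linarith
  have hmin : min s1 s2 ≤ s := min_segD_le a p b
  have h1ρ : s1 ≤ p.ρ := segD_le_right a p
  have h2ρ : s2 ≤ p.ρ := segD_le_left p b
  have h1a : s1 ≤ a.ρ := segD_le_left a p
  have h2b : s2 ≤ b.ρ := segD_le_right p b
  rcases le_total s1 s2 with hc | hc
  · -- s1 = s, s2 = p.ρ, p on the b-side
    have hmin' : s1 ≤ s := (min_eq_left hc) ▸ hmin
    have hs1s : s1 = s := le_antisymm hmin' (by linarith)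
    have hs2ρ : s2 = p.ρ := le_antisymm h2ρ (by linarith)
    have hpt : p = trunc b p.ρ := eq_trunc_of_segD (by rw [← segD_comm, ← hs2, hs2ρ])
    have hρx : p.ρ = x - a.ρ + 2 * s := by linarith
    have hxr : a.ρ - s ≤ x := by
      have : s ≤ p.ρ := by rw [← hs1s]; exact h1ρ
      linarith
    rw [geo_right hxr, ← hρx, ← hpt]
  · have hmin' : s2 ≤ s := (min_eq_right hc) ▸ hmin
    have hs2s : s2 = s := le_antisymm hmin' (by linarith)
    have hs1ρ : s1 = p.ρ := le_antisymm h1ρ (by linarith)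
    have hpt : p = trunc a p.ρ := eq_trunc_of_segD (by rw [← hs1, hs1ρ])
    have hρx : p.ρ = a.ρ - x := by linarith
    have hxr : x ≤ a.ρ - s := by
      have : s ≤ p.ρ := by rw [← hs2s]; exact h2ρ
      linarith
    rw [geo_left hxr, ← hρx, ← hpt]

lemma geo_image (a b : Dp) :
    geo a b '' Set.Icc 0 (dD a b) =
      trunc a '' Set.Icc (segD a b) a.ρ ∪ trunc b '' Set.Icc (segD a b) b.ρ := by
  have hs0 := segD_nonneg a b
  have hs1 := segD_le_left a b
  have hs2 := segD_le_right a b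
  have hd := dD_eq a b
  ext q
  constructor
  · rintro ⟨x, ⟨hx0, hxd⟩, rfl⟩
    rw [hd] at hxd
    by_cases hxl : x ≤ a.ρ - segD a b
    · exact Or.inl ⟨a.ρ - x, ⟨by linarith, by linarith⟩, (geo_left hxl).symm⟩
    · push_neg at hxl
      exact Or.inr ⟨x - a.ρ + 2 * segD a b, ⟨by linarith, by linarith⟩, (geo_right hxl.le).symm⟩
  · rintro (⟨r, ⟨hr1, hr2⟩, rfl⟩ | ⟨r, ⟨hr1, hr2⟩, rfl⟩)
    · refine ⟨a.ρ - r, ⟨by linarith, by rw [hd]; linarith⟩, ?_⟩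
      rw [geo_left (by linarith)]
      congr 1; ring
    · refine ⟨r + a.ρ - 2 * segD a b, ⟨by linarith, by rw [hd]; linarith⟩, ?_⟩
      rw [geo_right (by linarith)]
      congr 1; ring

lemma trunc_eq_of_eq_trunc {b c : Dp} (hb : b = trunc c b.ρ) {r : ℝ} (hr : r ≤ b.ρ) :
    trunc b r = trunc c r := by
  have := trunc_trunc c hr
  rwa [← hb] at this

/-- The main concatenation lemma. -/
lemma concat (a b c : Dp) (g1 g2 : ℝ → Dp) (hg1 : IsGeodesicD g1 a b)
    (hg2 : IsGeodesicD g2 b c)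
    (hinter : (g1 '' Set.Icc 0 (dD a b)) ∩ (g2 '' Set.Icc 0 (dD b c)) = {b}) :
    IsGeodesicD (geo a c) a c ∧
      geo a c '' Set.Icc 0 (dD a c) =
        (g1 '' Set.Icc 0 (dD a b)) ∪ (g2 '' Set.Icc 0 (dD b c)) := by
  refine ⟨geo_isGeodesic a c, ?_⟩
  have h1img : g1 '' Set.Icc 0 (dD a b)
      = trunc a '' Set.Icc (segD a b) a.ρ ∪ trunc b '' Set.Icc (segD a b) b.ρ := by
    rw [← (geo_unique a b g1 hg1).image_eq, geo_image]
  have h2img : g2 '' Set.Icc 0 (dD b c)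
      = trunc b '' Set.Icc (segD b c) b.ρ ∪ trunc c '' Set.Icc (segD b c) c.ρ := by
    rw [← (geo_unique b c g2 hg2).image_eq, geo_image]
  -- first: max (segD a b) (segD b c) = b.ρ
  have hab2 := segD_le_right a b
  have hbc1 := segD_le_left b c
  have hab0 := segD_nonneg a b
  have hbc0 := segD_nonneg b c
  have hmax : max (segD a b) (segD b c) = b.ρ := by
    set m := max (segD a b) (segD b c) with hm
    have hm2 : m ≤ b.ρ := max_le hab2 hbc1
    have hmem : trunc b m ∈ (g1 '' Set.Icc 0 (dD a b)) ∩ (g2 '' Set.Icc 0 (dD b c)) := by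
      constructor
      · rw [h1img]
        exact Or.inr ⟨m, ⟨le_max_left _ _, hm2⟩, rfl⟩
      · rw [h2img]
        exact Or.inl ⟨m, ⟨le_max_right _ _, hm2⟩, rfl⟩
    rw [hinter] at hmem
    have := congrArg Dp.ρ hmem
    rwa [trunc_ρ b (le_trans hab0 (le_max_left _ _))] at this
  have hac1 := segD_le_left a c
  have hac2 := segD_le_right a c
  have hac0 := segD_nonneg a c
  rcases max_choice (segD a b) (segD b c) with hcase | hcase
  · -- segD a b = b.ρ : b = trunc a b.ρ
    rw [hcase] at hmax
    have hb : b = trunc a b.ρ := eq_trunc_of_segD hmax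
    have hρa : b.ρ ≤ a.ρ := hmax ▸ segD_le_left a b
    have hkey : segD b c = min (min b.ρ c.ρ) (segD a c) := by
      conv_lhs => rw [hb, ← trunc_self c]
      exact segD_trunc a c b.ρ_nonneg hρa c.ρ_nonneg le_rfl
    have hsac : segD a c ≤ b.ρ := by
      by_contra hlt
      push_neg at hlt
      have hsbc : segD b c = b.ρ := by
        rw [hkey, min_eq_left (min_le_of_left_le hlt.le),
          min_eq_left (le_trans hlt.le hac2)]
      have hq : trunc a (segD a c) ∈
          (g1 '' Set.Icc 0 (dD a b)) ∩ (g2 '' Set.Icc 0 (dD b c)) := by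
        constructor
        · rw [h1img]
          exact Or.inl ⟨segD a c, ⟨hmax ▸ hlt.le, hac1⟩, rfl⟩
        · rw [h2img]
          refine Or.inr ⟨segD a c, ⟨hsbc ▸ hlt.le, hac2⟩, ?_⟩
          exact (trunc_congr le_rfl).symm
      rw [hinter] at hq
      have := congrArg Dp.ρ hq
      rw [trunc_ρ a hac0] at this
      exact absurd this (ne_of_gt hlt)
    have hseq : segD b c = segD a c := by
      rw [hkey, min_eq_right (le_min hsac hac2)]
    have e1 : trunc b '' Set.Icc b.ρ b.ρ = trunc a '' Set.Icc b.ρ b.ρ :=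
      Set.image_congr fun r hr => trunc_eq_of_eq_trunc hb hr.2
    have e2 : trunc b '' Set.Icc (segD a c) b.ρ = trunc a '' Set.Icc (segD a c) b.ρ :=
      Set.image_congr fun r hr => trunc_eq_of_eq_trunc hb hr.2
    rw [geo_image, h1img, h2img, hmax, hseq, e1, e2,
      ← Set.image_union, Set.union_eq_self_of_subset_right (Set.Icc_subset_Icc le_rfl hρa),
      ← Set.union_assoc, ← Set.image_union, Set.union_comm (Set.Icc b.ρ a.ρ),
      Set.Icc_union_Icc_eq_Icc hsac hρa]
  · -- segD b c = b.ρ : b = trunc c b.ρ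
    rw [hcase] at hmax
    have hb : b = trunc c b.ρ := eq_trunc_of_segD (by rw [segD_comm]; exact hmax)
    have hρc : b.ρ ≤ c.ρ := hmax ▸ segD_le_right b c
    have hkey : segD a b = min (min a.ρ b.ρ) (segD a c) := by
      conv_lhs => rw [hb, ← trunc_self a]
      exact segD_trunc a c a.ρ_nonneg le_rfl b.ρ_nonneg hρc
    have hsac : segD a c ≤ b.ρ := by
      by_contra hlt
      push_neg at hlt
      have hsab : segD a b = b.ρ := by
        rw [hkey, min_eq_left (min_le_of_right_le hlt.le),
          min_eq_right (le_trans hlt.le hac1)]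
      have hq : trunc a (segD a c) ∈
          (g1 '' Set.Icc 0 (dD a b)) ∩ (g2 '' Set.Icc 0 (dD b c)) := by
        constructor
        · rw [h1img]
          exact Or.inl ⟨segD a c, ⟨by rw [hsab]; exact hlt.le, hac1⟩, rfl⟩
        · rw [h2img]
          refine Or.inr ⟨segD a c, ⟨by rw [hmax]; exact hlt.le, hac2⟩, ?_⟩
          exact (trunc_congr (a := a) (b := c) le_rfl).symm
      rw [hinter] at hq
      have := congrArg Dp.ρ hq
      rw [trunc_ρ a hac0] at this
      exact absurd this (ne_of_gt hlt)
    have hseq : segD a b = segD a c := by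
      rw [hkey, min_eq_right (le_min hac1 hsac)]
    have e1 : trunc b '' Set.Icc (segD a c) b.ρ = trunc c '' Set.Icc (segD a c) b.ρ :=
      Set.image_congr fun r hr => trunc_eq_of_eq_trunc hb hr.2
    have e2 : trunc b '' Set.Icc b.ρ b.ρ = trunc c '' Set.Icc b.ρ b.ρ :=
      Set.image_congr fun r hr => trunc_eq_of_eq_trunc hb hr.2
    rw [geo_image, h1img, h2img, hmax, hseq, e1, e2,
      ← Set.image_union (trunc c) (Set.Icc b.ρ b.ρ),
      Set.union_eq_self_of_subset_left (Set.Icc_subset_Icc le_rfl hρc),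
      Set.union_assoc, ← Set.image_union, Set.Icc_union_Icc_eq_Icc hsac hρc]

/-- `D`, with the segregation metric, is a real tree. -/
theorem Dp_is_real_tree :
    (∀ a b : Dp, ∃ g : ℝ → Dp, IsGeodesicD g a b ∧
      ∀ g' : ℝ → Dp, IsGeodesicD g' a b → Set.EqOn g g' (Set.Icc 0 (dD a b))) ∧
    (∀ a b c : Dp, ∀ g1 g2 : ℝ → Dp, IsGeodesicD g1 a b → IsGeodesicD g2 b c →
      (g1 '' Set.Icc 0 (dD a b)) ∩ (g2 '' Set.Icc 0 (dD b c)) = {b} →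
      ∃ h : ℝ → Dp, IsGeodesicD h a c ∧
        h '' Set.Icc 0 (dD a c) =
          (g1 '' Set.Icc 0 (dD a b)) ∪ (g2 '' Set.Icc 0 (dD b c))) := by
  constructor
  · intro a b
    exact ⟨geo a b, geo_isGeodesic a b, fun g' hg' => geo_unique a b g' hg'⟩
  · intro a b c g1 g2 hg1 hg2 hinter
    obtain ⟨h1, h2⟩ := concat a b c g1 g2 hg1 hg2 hinter
    exact ⟨geo a c, h1, h2⟩
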